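/- There exists a constant C > 0 such that for every x ∈ ℝ², ∫_{ℝ²} |log|x−y|| · (1+|y|²)^{−2} dy ≤ C·(1 + log(1+|x|)). -/

import Mathlib

open MeasureTheory Real Set

noncomputable def F2 : EuclideanSpace ℝ (Fin 2) → ℝ :=
  (Metric.ball (0 : EuclideanSpace ℝ (Fin 2)) 1).indicator (fun z => ‖z‖⁻¹)

lemma oneDim : IntegrableOn (fun a : ℝ => |a| ^ (-(1:ℝ)/2)) (Set.Ioc (-1:ℝ) 1) := by
  have h01 : IntegrableOn (fun a : ℝ => |a| ^ (-(1:ℝ)/2)) (Set.Ioc (0:ℝ) 1) := by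
    have h := intervalIntegral.intervalIntegrable_rpow' (a := (0:ℝ)) (b := 1) (r := -(1:ℝ)/2) (by norm_num)
    rw [intervalIntegrable_iff, uIoc_of_le zero_le_one] at h
    exact h.congr_fun (fun a ha => by rw [abs_of_pos ha.1]) measurableSet_Ioc
  have hneg : IntegrableOn (fun a : ℝ => |a| ^ (-(1:ℝ)/2)) (Set.Ioc (-1:ℝ) 0) := by
    have h2 : IntervalIntegrable (fun a : ℝ => |a| ^ (-(1:ℝ)/2)) volume 0 1 := by
      rw [intervalIntegrable_iff, uIoc_of_le zero_le_one]; exact h01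
    have h3 := (IntervalIntegrable.iff_comp_neg).mp h2
    simp only [abs_neg, neg_zero] at h3
    have h4 := h3.symm
    rw [intervalIntegrable_iff] at h4
    rwa [uIoc_of_le (by norm_num : (-1:ℝ) ≤ 0)] at h4
  have := hneg.union h01
  rwa [Set.Ioc_union_Ioc_eq_Ioc (by norm_num : (-1:ℝ) ≤ 0) (by norm_num : (0:ℝ) ≤ 1)] at this

lemma integrable_F2 : Integrable F2 := by
  set e : (ℝ × ℝ) ≃ᵐ EuclideanSpace ℝ (Fin 2) :=
    (MeasurableEquiv.finTwoArrow).symm.trans (MeasurableEquiv.toLp 2 (Fin 2 → ℝ)) with he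
  have mp : MeasurePreserving e volume volume :=
    ((EuclideanSpace.volume_preserving_symm_measurableEquiv_toLp (Fin 2)).symm _).comp
      ((volume_preserving_finTwoArrow ℝ).symm _)
  have hF2m : Measurable F2 :=
    ((measurable_norm).inv).indicator measurableSet_ball
  rw [← mp.integrable_comp_emb e.measurableEmbedding]
  -- g : dominating function on ℝ × ℝ
  set u : ℝ → ℝ := (Set.Ioc (-1:ℝ) 1).indicator (fun a => |a| ^ (-(1:ℝ)/2)) with hu
  have hui : Integrable u := by
    rw [hu, integrable_indicator_iff measurableSet_Ioc]; exact oneDim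
  have hg : Integrable (fun p : ℝ × ℝ => u p.1 * u p.2) := by
    rw [Measure.volume_eq_prod]; exact hui.mul_prod hui
  have hunn : ∀ a, 0 ≤ u a := fun a => Set.indicator_nonneg (fun b _ => by positivity) a
  refine hg.mono' (hF2m.comp e.measurable).aestronglyMeasurable ?_
  have h1 : ∀ᵐ p : ℝ × ℝ, p.1 ≠ 0 := by
    rw [ae_iff]
    have hset : {p : ℝ × ℝ | ¬ p.1 ≠ 0} = ({0} : Set ℝ) ×ˢ (univ : Set ℝ) := by
      ext p; simp [Prod.ext_iff, eq_comm]
    rw [hset, Measure.volume_eq_prod, Measure.prod_prod]; simp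
  have h2 : ∀ᵐ p : ℝ × ℝ, p.2 ≠ 0 := by
    rw [ae_iff]
    have hset : {p : ℝ × ℝ | ¬ p.2 ≠ 0} = (univ : Set ℝ) ×ˢ ({0} : Set ℝ) := by
      ext p; simp [Prod.ext_iff, eq_comm]
    rw [hset, Measure.volume_eq_prod, Measure.prod_prod]; simp
  filter_upwards [h1, h2] with p hp1 hp2
  have hnorm : ‖e p‖ = Real.sqrt (p.1^2 + p.2^2) := by
    rw [EuclideanSpace.norm_eq]
    congr 1
    rw [Fin.sum_univ_two]
    have e0 : (e p) 0 = p.1 := rfl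
    have e1 : (e p) 1 = p.2 := rfl
    rw [e0, e1]
    simp [sq_abs]
  -- now the pointwise bound
  have hF2nn : 0 ≤ F2 (e p) := Set.indicator_nonneg (fun z _ => by positivity) _
  rw [Function.comp_apply, Real.norm_of_nonneg hF2nn]
  by_cases hmem : e p ∈ Metric.ball (0 : EuclideanSpace ℝ (Fin 2)) 1
  · rw [F2, Set.indicator_of_mem hmem]
    have hlt : Real.sqrt (p.1^2 + p.2^2) < 1 := by
      rw [← hnorm]; exact mem_ball_zero_iff.mp hmem
    have hp1abs : |p.1| < 1 := by
      have : |p.1| = Real.sqrt (p.1^2) := (Real.sqrt_sq_eq_abs p.1).symm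
      rw [this]
      calc Real.sqrt (p.1^2) ≤ Real.sqrt (p.1^2 + p.2^2) := Real.sqrt_le_sqrt (by nlinarith [sq_nonneg p.2])
        _ < 1 := hlt
    have hp2abs : |p.2| < 1 := by
      have : |p.2| = Real.sqrt (p.2^2) := (Real.sqrt_sq_eq_abs p.2).symm
      rw [this]
      calc Real.sqrt (p.2^2) ≤ Real.sqrt (p.1^2 + p.2^2) := Real.sqrt_le_sqrt (by nlinarith [sq_nonneg p.1])
        _ < 1 := hlt
    have hu1 : u p.1 = |p.1| ^ (-(1:ℝ)/2) := Set.indicator_of_mem (by constructor <;> [linarith [abs_lt.mp hp1abs]; linarith [abs_lt.mp hp1abs]]) _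
    have hu2 : u p.2 = |p.2| ^ (-(1:ℝ)/2) := Set.indicator_of_mem (by constructor <;> [linarith [abs_lt.mp hp2abs]; linarith [abs_lt.mp hp2abs]]) _
    rw [hu1, hu2, hnorm]
    have hp1pos : 0 < |p.1| := abs_pos.mpr hp1
    have hp2pos : 0 < |p.2| := abs_pos.mpr hp2
    have key : Real.sqrt (|p.1| * |p.2|) ≤ Real.sqrt (p.1^2 + p.2^2) := by
      apply Real.sqrt_le_sqrt
      nlinarith [sq_nonneg (|p.1| - |p.2|), sq_abs p.1, sq_abs p.2]
    have hspos : 0 < Real.sqrt (|p.1| * |p.2|) := Real.sqrt_pos.mpr (by positivity)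
    have hinv : (Real.sqrt (p.1^2 + p.2^2))⁻¹ ≤ (Real.sqrt (|p.1| * |p.2|))⁻¹ :=
      inv_anti₀ hspos key
    refine hinv.trans_eq ?_
    rw [Real.sqrt_eq_rpow, ← Real.rpow_neg (by positivity),
      Real.mul_rpow (abs_nonneg _) (abs_nonneg _)]
    · ring_nf
  · rw [F2, Set.indicator_of_notMem hmem]
    exact mul_nonneg (hunn _) (hunn _)

lemma integrable_w : Integrable (fun y : EuclideanSpace ℝ (Fin 2) => ((1 + ‖y‖^2)^2)⁻¹) := by
  have h := integrable_rpow_neg_one_add_norm_sq (μ := (volume : Measure (EuclideanSpace ℝ (Fin 2)))) (r := 4) (by simp; norm_num)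
  refine h.congr (ae_of_all _ fun y => ?_)
  show (1 + ‖y‖^2) ^ (-(4:ℝ)/2) = ((1 + ‖y‖^2)^2)⁻¹
  rw [show (-(4:ℝ)/2) = -((2:ℕ):ℝ) by norm_num, Real.rpow_neg (by positivity), Real.rpow_natCast]

lemma integrable_logw : Integrable (fun y : EuclideanSpace ℝ (Fin 2) => Real.log (1 + ‖y‖) * ((1 + ‖y‖^2)^2)⁻¹) := by
  have h := integrable_rpow_neg_one_add_norm_sq (μ := (volume : Measure (EuclideanSpace ℝ (Fin 2)))) (r := 3) (by simp; norm_num)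
  refine (h.const_mul 2).mono' ?_ (ae_of_all _ fun y => ?_)
  · exact ((Real.measurable_log.comp (measurable_const.add measurable_norm)).mul
      (((measurable_const.add (measurable_norm.pow_const 2)).pow_const 2).inv)).aestronglyMeasurable
  · have hy : (0:ℝ) < 1 + ‖y‖^2 := by positivity
    have hlognn : 0 ≤ Real.log (1 + ‖y‖) := Real.log_nonneg (by linarith [norm_nonneg y])
    rw [Real.norm_of_nonneg (by positivity)]
    have h1 : Real.log (1 + ‖y‖) ≤ 1 + ‖y‖ := by
      have := Real.log_le_sub_one_of_pos (show (0:ℝ) < 1 + ‖y‖ by positivity)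
      linarith
    have h2 : (1 : ℝ) + ‖y‖ ≤ 2 * Real.sqrt (1 + ‖y‖^2) := by
      have := one_add_norm_le_sqrt_two_mul_sqrt (E := EuclideanSpace ℝ (Fin 2)) y
      have hs2 : Real.sqrt 2 ≤ 2 := by
        nlinarith [Real.sq_sqrt (show (0:ℝ) ≤ 2 by norm_num), Real.sqrt_nonneg 2]
      nlinarith [Real.sqrt_nonneg (1 + ‖y‖^2)]
    calc Real.log (1 + ‖y‖) * ((1 + ‖y‖^2)^2)⁻¹
        ≤ (2 * Real.sqrt (1 + ‖y‖^2)) * ((1 + ‖y‖^2)^2)⁻¹ := by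
          apply mul_le_mul_of_nonneg_right (h1.trans h2) (by positivity)
      _ = 2 * (1 + ‖y‖^2) ^ (-(3:ℝ)/2) := by
          rw [Real.sqrt_eq_rpow, show ((1 + ‖y‖^2)^2)⁻¹ = (1 + ‖y‖^2) ^ (-(2:ℕ):ℝ) by
            rw [Real.rpow_neg hy.le, Real.rpow_natCast],
            mul_assoc, ← Real.rpow_add hy]
          norm_num


theorem log_kernel_estimate :
    ∃ C : ℝ, 0 < C ∧ ∀ x : EuclideanSpace ℝ (Fin 2),
      (∫ y, |Real.log ‖x - y‖| / (1 + ‖y‖ ^ 2) ^ 2)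
        ≤ C * (1 + Real.log (1 + ‖x‖)) := by
  set w : EuclideanSpace ℝ (Fin 2) → ℝ := fun y => ((1 + ‖y‖^2)^2)⁻¹ with hw
  set A : ℝ := ∫ z, F2 z with hA
  set Iw : ℝ := ∫ y, w y with hIw
  set Il : ℝ := ∫ y, Real.log (1 + ‖y‖) * w y with hIl
  have hAnn : 0 ≤ A := integral_nonneg (fun z => Set.indicator_nonneg (fun z _ => by positivity) z)
  have hIwnn : 0 ≤ Iw := integral_nonneg (fun y => by positivity)
  have hIlnn : 0 ≤ Il := integral_nonneg (fun y => by
    have : (0:ℝ) ≤ Real.log (1 + ‖y‖) := Real.log_nonneg (by linarith [norm_nonneg y])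
    positivity)
  refine ⟨A + Il + Iw + 1, by linarith, fun x => ?_⟩
  set L : ℝ := Real.log (1 + ‖x‖) with hL
  have hLnn : 0 ≤ L := Real.log_nonneg (by linarith [norm_nonneg x])
  set G : EuclideanSpace ℝ (Fin 2) → ℝ :=
    fun y => F2 (x - y) + (L * w y + Real.log (1 + ‖y‖) * w y) with hG
  have hint1 : Integrable (fun y => F2 (x - y)) := integrable_F2.comp_sub_left x
  have hint2 : Integrable (fun y : EuclideanSpace ℝ (Fin 2) => L * w y + Real.log (1 + ‖y‖) * w y) :=
    (integrable_w.const_mul L).add integrable_logw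
  have hGint : Integrable G := hint1.add hint2
  have hmono : ∀ y, |Real.log ‖x - y‖| / (1 + ‖y‖ ^ 2) ^ 2 ≤ G y := by
    intro y
    have hWpos : (0:ℝ) < (1 + ‖y‖^2)^2 := by positivity
    have hW1 : (1:ℝ) ≤ (1 + ‖y‖^2)^2 := by nlinarith [sq_nonneg ‖y‖]
    have hFnn : 0 ≤ F2 (x - y) := Set.indicator_nonneg (fun z _ => by positivity) _
    have hsec_nn : 0 ≤ L * w y + Real.log (1 + ‖y‖) * w y := by
      have h1 : (0:ℝ) ≤ Real.log (1 + ‖y‖) := Real.log_nonneg (by linarith [norm_nonneg y])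
      have h2 : (0:ℝ) ≤ w y := by positivity
      positivity
    rcases lt_or_ge ‖x - y‖ 1 with h1 | h1
    · have hmem : x - y ∈ Metric.ball (0 : EuclideanSpace ℝ (Fin 2)) 1 := mem_ball_zero_iff.mpr h1
      have hF2eq : F2 (x - y) = ‖x - y‖⁻¹ := Set.indicator_of_mem hmem _
      rcases eq_or_lt_of_le (norm_nonneg (x - y)) with h0 | h0
      · have : Real.log ‖x - y‖ = 0 := by rw [← h0]; exact Real.log_zero
        rw [this]
        simp only [abs_zero, zero_div]
        have : (0:ℝ) ≤ ‖x - y‖⁻¹ := by positivity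
        simp only [hG, hF2eq]; linarith
      · have hlogle : |Real.log ‖x - y‖| ≤ ‖x - y‖⁻¹ := by
          rw [abs_of_nonpos (Real.log_nonpos h0.le h1.le), ← Real.log_inv]
          have := Real.log_le_sub_one_of_pos (inv_pos.mpr h0)
          linarith
        have hdiv : |Real.log ‖x - y‖| / (1 + ‖y‖ ^ 2) ^ 2 ≤ |Real.log ‖x - y‖| :=
          div_le_self (abs_nonneg _) hW1
        simp only [hG, hF2eq]
        linarith
    · have habs : |Real.log ‖x - y‖| = Real.log ‖x - y‖ := abs_of_nonneg (Real.log_nonneg h1)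
      have hprod : ‖x - y‖ ≤ (1 + ‖x‖) * (1 + ‖y‖) := by
        have h2 : ‖x - y‖ ≤ ‖x‖ + ‖y‖ := norm_sub_le x y
        nlinarith [norm_nonneg x, norm_nonneg y]
      have hlogle : Real.log ‖x - y‖ ≤ L + Real.log (1 + ‖y‖) := by
        rw [hL, ← Real.log_mul (by positivity) (by positivity)]
        exact Real.log_le_log (by linarith) hprod
      have : |Real.log ‖x - y‖| / (1 + ‖y‖ ^ 2) ^ 2 ≤ (L + Real.log (1 + ‖y‖)) * w y := by
        rw [div_eq_mul_inv, habs]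
        exact mul_le_mul_of_nonneg_right hlogle (by positivity)
      simp only [hG]
      linarith [this, hFnn]
  have hle : (∫ y, |Real.log ‖x - y‖| / (1 + ‖y‖ ^ 2) ^ 2) ≤ ∫ y, G y :=
    integral_mono_of_nonneg (ae_of_all _ fun y => by positivity) hGint (ae_of_all _ hmono)
  have hGval : (∫ y, G y) = A + (L * Iw + Il) := by
    rw [hG, integral_add hint1 hint2, integral_add (integrable_w.const_mul L) integrable_logw,
      MeasureTheory.integral_const_mul]
    congr 1
    exact integral_sub_left_eq_self F2 volume x
  rw [hGval] at hle
  refine hle.trans ?_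
  nlinarith
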